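/- Let (g, [·,·]_1, [·,·]_2, α) be a compatible Hom-Lie algebra and (V, •_1, •_2, β) a representation. Then g ⊕ V with twisting map α⊕β and brackets [(x,u),(y,v)]_i := ([x,y]_i, x•_i v − y•_i u), i = 1,2, is a compatible Hom-Lie algebra (the semidirect product). -/
import Mathlib


/-- A bilinear map, as a predicate on plain two-argument functions. -/
def IsBilin (K : Type*) {M N P : Type*} [Field K] [AddCommGroup M] [Module K M]
    [AddCommGroup N] [Module K N] [AddCommGroup P] [Module K P]
    (b : M → N → P) : Prop :=
  (∀ x, IsLinearMap K (b x)) ∧ (∀ y, IsLinearMap K fun x => b x y)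

/-- A Hom-Lie algebra structure: bilinear skew-symmetric bracket `b` and a linear
twisting map `α` satisfying multiplicativity and the Hom-Jacobi identity. -/
def IsHomLie (K : Type*) {g : Type*} [Field K] [AddCommGroup g] [Module K g]
    (b : g → g → g) (α : g → g) : Prop :=
  IsBilin K b ∧ IsLinearMap K α ∧
  (∀ x y, b x y = - b y x) ∧
  (∀ x y, α (b x y) = b (α x) (α y)) ∧
  (∀ x y z, b (b x y) (α z) + b (b y z) (α x) + b (b z x) (α y) = 0)

/-- A compatible Hom-Lie algebra: both brackets and every linear combination of
them are Hom-Lie brackets with the same twisting map `α`. -/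
def IsCompatHomLie (K : Type*) {g : Type*} [Field K] [AddCommGroup g] [Module K g]
    (b₁ b₂ : g → g → g) (α : g → g) : Prop :=
  IsHomLie K b₁ α ∧ IsHomLie K b₂ α ∧
  ∀ l m : K, IsHomLie K (fun x y => l • b₁ x y + m • b₂ x y) α

/-- A representation `(V, ρ, β)` of a Hom-Lie algebra `(g, b, α)`. -/
def IsRep (K : Type*) {g V : Type*} [Field K] [AddCommGroup g] [Module K g]
    [AddCommGroup V] [Module K V]
    (b : g → g → g) (α : g → g) (ρ : g → V → V) (β : V → V) : Prop :=
  IsBilin K ρ ∧ IsLinearMap K β ∧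
  (∀ x v, β (ρ x v) = ρ (α x) (β v)) ∧
  (∀ x y v, ρ (b x y) (β v) = ρ (α x) (ρ y v) - ρ (α y) (ρ x v))

lemma semidirect_homLie {K g V : Type*} [Field K] [AddCommGroup g] [Module K g]
    [AddCommGroup V] [Module K V]
    (b : g → g → g) (α : g → g) (ρ : g → V → V) (β : V → V)
    (hb : IsHomLie K b α) (hr : IsRep K b α ρ β) :
    IsHomLie K (fun p q : g × V => (b p.1 q.1, ρ p.1 q.2 - ρ q.1 p.2))
      (fun p => (α p.1, β p.2)) := by
  obtain ⟨⟨hbl, hbr⟩, hα, hskew, hmul, hjac⟩ := hb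
  obtain ⟨⟨hρl, hρr⟩, hβ, hint, hrep⟩ := hr
  refine ⟨⟨?_, ?_⟩, ?_, ?_, ?_, ?_⟩
  · intro p
    constructor
    · intro q q'
      refine Prod.ext ?_ ?_ <;> simp [(hbl p.1).map_add, (hρl p.1).map_add,
        (hρr p.2).map_add] <;> abel
    · intro c q
      refine Prod.ext ?_ ?_ <;> simp [(hbl p.1).map_smul, (hρl p.1).map_smul,
        (hρr p.2).map_smul, smul_sub]
  · intro q
    constructor
    · intro p p'
      refine Prod.ext ?_ ?_ <;> simp [(hbr q.1).map_add, (hρl _).map_add,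
        (hρr q.2).map_add] <;> abel
    · intro c p
      refine Prod.ext ?_ ?_ <;> simp [(hbr q.1).map_smul, (hρl _).map_smul,
        (hρr q.2).map_smul, smul_sub]
  · constructor
    · intro p q
      refine Prod.ext ?_ ?_ <;> simp [hα.map_add, hβ.map_add]
    · intro c p
      refine Prod.ext ?_ ?_ <;> simp [hα.map_smul, hβ.map_smul]
  · intro p q
    refine Prod.ext ?_ ?_
    · simpa using hskew p.1 q.1
    · simp
  · intro p q
    refine Prod.ext ?_ ?_
    · simpa using hmul p.1 q.1
    · simp [hβ.map_sub, hint]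
  · intro p q r
    refine Prod.ext ?_ ?_
    · simpa using hjac p.1 q.1 r.1
    · change ρ (b p.1 q.1) (β r.2) - ρ (α r.1) (ρ p.1 q.2 - ρ q.1 p.2)
        + (ρ (b q.1 r.1) (β p.2) - ρ (α p.1) (ρ q.1 r.2 - ρ r.1 q.2))
        + (ρ (b r.1 p.1) (β q.2) - ρ (α q.1) (ρ r.1 p.2 - ρ p.1 r.2)) = 0
      rw [hrep, hrep, hrep, (hρl (α r.1)).map_sub, (hρl (α p.1)).map_sub,
        (hρl (α q.1)).map_sub]
      abel


/-- The semidirect product of a compatible Hom-Lie algebra with a representation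
is a compatible Hom-Lie algebra on `g ⊕ V`. -/
theorem stmt14 {K g V : Type*} [Field K] [AddCommGroup g] [Module K g]
    [AddCommGroup V] [Module K V]
    (b₁ b₂ : g → g → g) (α : g → g) (ρ₁ ρ₂ : g → V → V) (β : V → V)
    (h : IsCompatHomLie K b₁ b₂ α)
    (h₁ : IsRep K b₁ α ρ₁ β) (h₂ : IsRep K b₂ α ρ₂ β)
    (hc : ∀ x y v, ρ₂ (b₁ x y) (β v) + ρ₁ (b₂ x y) (β v)
      = ρ₁ (α x) (ρ₂ y v) - ρ₂ (α y) (ρ₁ x v)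
        + ρ₂ (α x) (ρ₁ y v) - ρ₁ (α y) (ρ₂ x v)) :
    IsCompatHomLie K
      (fun p q : g × V => (b₁ p.1 q.1, ρ₁ p.1 q.2 - ρ₁ q.1 p.2))
      (fun p q : g × V => (b₂ p.1 q.1, ρ₂ p.1 q.2 - ρ₂ q.1 p.2))
      (fun p => (α p.1, β p.2)) := by
  obtain ⟨hb1, hb2, hcomb⟩ := h
  refine ⟨semidirect_homLie _ _ _ _ hb1 h₁, semidirect_homLie _ _ _ _ hb2 h₂, ?_⟩
  intro l m
  obtain ⟨⟨hρ1l, hρ1r⟩, hβ, hint1, hrep1⟩ := h₁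
  obtain ⟨⟨hρ2l, hρ2r⟩, -, hint2, hrep2⟩ := h₂
  have hrep : IsRep K (fun x y => l • b₁ x y + m • b₂ x y) α
      (fun x v => l • ρ₁ x v + m • ρ₂ x v) β := by
    refine ⟨⟨?_, ?_⟩, hβ, ?_, ?_⟩
    · intro x
      constructor
      · intro v w
        simp only [(hρ1l x).map_add, (hρ2l x).map_add, smul_add]
        abel
      · intro c v
        simp only [(hρ1l x).map_smul, (hρ2l x).map_smul, smul_add, smul_comm l c,
          smul_comm m c]
    · intro v
      constructor
      · intro x y
        simp only [(hρ1r v).map_add, (hρ2r v).map_add, smul_add]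
        abel
      · intro c x
        simp only [(hρ1r v).map_smul, (hρ2r v).map_smul, smul_add, smul_comm l c,
          smul_comm m c]
    · intro x v
      simp only [hβ.map_add, hβ.map_smul, hint1, hint2]
    · intro x y v
      have A1 : ∀ (a b : g) (w : V), ρ₁ (l • a + m • b) w
          = l • ρ₁ a w + m • ρ₁ b w := fun a b w => by
        rw [(hρ1r w).map_add, (hρ1r w).map_smul, (hρ1r w).map_smul]
      have A2 : ∀ (a b : g) (w : V), ρ₂ (l • a + m • b) w
          = l • ρ₂ a w + m • ρ₂ b w := fun a b w => by
        rw [(hρ2r w).map_add, (hρ2r w).map_smul, (hρ2r w).map_smul]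
      have B1 : ∀ (a : g) (u w : V), ρ₁ a (l • u + m • w)
          = l • ρ₁ a u + m • ρ₁ a w := fun a u w => by
        rw [(hρ1l a).map_add, (hρ1l a).map_smul, (hρ1l a).map_smul]
      have B2 : ∀ (a : g) (u w : V), ρ₂ a (l • u + m • w)
          = l • ρ₂ a u + m • ρ₂ a w := fun a u w => by
        rw [(hρ2l a).map_add, (hρ2l a).map_smul, (hρ2l a).map_smul]
      simp only [A1, A2, B1, B2, hrep1 x y v, hrep2 x y v]
      linear_combination (norm := module) (l * m) • hc x y v
  have key := semidirect_homLie (fun x y => l • b₁ x y + m • b₂ x y) α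
    (fun x v => l • ρ₁ x v + m • ρ₂ x v) β (hcomb l m) hrep
  convert key using 1
  funext p q
  refine Prod.ext rfl ?_
  show l • (ρ₁ p.1 q.2 - ρ₁ q.1 p.2) + m • (ρ₂ p.1 q.2 - ρ₂ q.1 p.2)
    = (l • ρ₁ p.1 q.2 + m • ρ₂ p.1 q.2) - (l • ρ₁ q.1 p.2 + m • ρ₂ q.1 p.2)
  module
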